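/- Let l/k be a finite extension of fields. Then l is a simple extension of k, i.e., there exists x ∈ l such that the smallest subfield of l containing k and x is l itself, if and only if the l-vector space Ω¹_{l/k} of Kähler differentials of l over k has dimension at most 1 over l. -/

import Mathlib

open Polynomial IntermediateField

/-- Strengthened version of `Field.primitive_element_inf_aux`: only `β` needs to be separable. -/
theorem my_primitive_element_inf_aux (F : Type*) [Field F] [Infinite F] {E : Type*} [Field E]
    [Algebra F E] (α β : E) (hα : IsIntegral F α) (hβ : IsIntegral F β)
    (hβsep : IsSeparable F β) : ∃ γ : E, F⟮α, β⟯ = F⟮γ⟯ := by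
  classical
  let f := minpoly F α
  let g := minpoly F β
  let ιFE := algebraMap F E
  let ιEE' := algebraMap E (SplittingField (g.map ιFE))
  obtain ⟨c, hc⟩ := Field.primitive_element_inf_aux_exists_c (ιEE'.comp ιFE) (ιEE' α) (ιEE' β) f g
  let γ := α + c • β
  suffices β_in_Fγ : β ∈ F⟮γ⟯ by
    use γ
    apply le_antisymm
    · rw [adjoin_le_iff]
      have α_in_Fγ : α ∈ F⟮γ⟯ := by
        rw [← add_sub_cancel_right α (c • β)]
        exact F⟮γ⟯.sub_mem (mem_adjoin_simple_self F γ) (F⟮γ⟯.toSubalgebra.smul_mem β_in_Fγ c)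
      rintro x (rfl | rfl) <;> assumption
    · rw [adjoin_simple_le_iff]
      have α_in_Fαβ : α ∈ F⟮α, β⟯ := subset_adjoin F {α, β} (Set.mem_insert α {β})
      have β_in_Fαβ : β ∈ F⟮α, β⟯ := subset_adjoin F {α, β} (Set.mem_insert_of_mem α rfl)
      exact F⟮α, β⟯.add_mem α_in_Fαβ (F⟮α, β⟯.smul_mem β_in_Fαβ)
  classical
  let p := EuclideanDomain.gcd ((f.map (algebraMap F F⟮γ⟯)).comp
    (C (AdjoinSimple.gen F γ) - (C ↑c : F⟮γ⟯[X]) * X)) (g.map (algebraMap F F⟮γ⟯))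
  let h := EuclideanDomain.gcd ((f.map ιFE).comp (C γ - C (ιFE c) * X)) (g.map ιFE)
  have map_g_ne_zero : g.map ιFE ≠ 0 := map_ne_zero (minpoly.ne_zero hβ)
  have h_ne_zero : h ≠ 0 :=
    mt EuclideanDomain.gcd_eq_zero_iff.mp (not_and.mpr fun _ => map_g_ne_zero)
  suffices p_linear : p.map (algebraMap F⟮γ⟯ E) = C h.leadingCoeff * (X - C β) by
    have finale : β = algebraMap F⟮γ⟯ E (-p.coeff 0 / p.coeff 1) := by
      rw [map_div₀, RingHom.map_neg, ← coeff_map, ← coeff_map, p_linear]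
      simp [mul_sub, coeff_C, mul_div_cancel_left₀ β (mt leadingCoeff_eq_zero.mp h_ne_zero),
        -map_add]
    rw [finale]
    exact Subtype.mem (-p.coeff 0 / p.coeff 1)
  have h_sep : h.Separable := separable_gcd_right _ (Polynomial.Separable.map hβsep)
  have h_root : h.eval β = 0 := by
    apply eval_gcd_eq_zero
    · rw [eval_comp, eval_sub, eval_mul, eval_C, eval_C, eval_X, eval_map, ← aeval_def, ←
        Algebra.smul_def, add_sub_cancel_right, minpoly.aeval]
    · rw [eval_map, ← aeval_def, minpoly.aeval]
  have h_splits : Splits (h.map ιEE') := by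
    rw [← Polynomial.gcd_map]
    exact (SplittingField.splits _).of_dvd (map_ne_zero map_g_ne_zero)
      (EuclideanDomain.gcd_dvd_right _ _)
  have h_roots : ∀ x ∈ (h.map ιEE').roots, x = ιEE' β := by
    intro x hx
    rw [mem_roots_map h_ne_zero] at hx
    specialize hc (ιEE' γ - ιEE' (ιFE c) * x) (by
      have f_root := root_left_of_root_gcd hx
      rw [eval₂_comp, eval₂_sub, eval₂_mul, eval₂_C, eval₂_C, eval₂_X, eval₂_map] at f_root
      exact (mem_roots_map (minpoly.ne_zero hα)).mpr f_root)
    specialize hc x (by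
      rw [mem_roots_map (minpoly.ne_zero hβ), ← eval₂_map]
      exact root_right_of_root_gcd hx)
    by_contra a
    apply hc
    apply (div_eq_iff (sub_ne_zero.mpr a)).mpr
    simp only [γ, Algebra.smul_def, RingHom.map_add, RingHom.map_mul, RingHom.comp_apply]
    ring
  rw [← eq_X_sub_C_of_separable_of_root_eq h_sep h_root h_splits h_roots]
  trans EuclideanDomain.gcd (?_ : E[X]) (?_ : E[X])
  · dsimp only [γ]
    convert (gcd_map (algebraMap F⟮γ⟯ E)).symm
  · simp only [map_comp, Polynomial.map_map, ← IsScalarTower.algebraMap_eq, Polynomial.map_sub,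
      map_C, AdjoinSimple.algebraMap_gen, map_add, Polynomial.map_mul, map_X]
    congr

section Forward

variable (k l : Type) [Field k] [Field l] [Algebra k l] [FiniteDimensional k l]

theorem forward_dir (x : l) (hx : IntermediateField.adjoin k {x} = ⊤) :
    Module.rank l (Ω[l⁄k]) ≤ 1 := by
  have hint : IsIntegral k x := IsIntegral.of_finite k x
  have halg : Algebra.adjoin k {x} = ⊤ := by
    have := IntermediateField.adjoin_simple_toSubalgebra_of_isAlgebraic hint.isAlgebraic
    rw [hx] at this
    exact (this.symm.trans IntermediateField.top_toSubalgebra)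
  have hspan : Submodule.span l {KaehlerDifferential.D k l x} = ⊤ := by
    rw [eq_top_iff, ← KaehlerDifferential.span_range_derivation, Submodule.span_le]
    rintro _ ⟨a, rfl⟩
    have ha : a ∈ Algebra.adjoin k {x} := halg ▸ Algebra.mem_top
    rw [Algebra.adjoin_singleton_eq_range_aeval] at ha
    obtain ⟨P, rfl⟩ := ha
    show KaehlerDifferential.D k l (aeval x P) ∈ _
    rw [Derivation.map_aeval]
    exact Submodule.smul_mem _ _ (Submodule.mem_span_singleton_self _)
  have := rank_span_le (R := l) ({KaehlerDifferential.D k l x} : Set (Ω[l⁄k]))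
  rw [hspan, rank_top] at this
  simpa using this
end Forward

section Backward

variable (k l : Type) [Field k] [Field l] [Algebra k l] [FiniteDimensional k l]

/-- If `l` is purely inseparable over an intermediate field `L₀` and the differential of `y`
spans `Ω[l⁄L₀]`, then `l = L₀(y)`. -/
theorem adjoin_eq_top_of_span (L₀ : IntermediateField k l) [IsPurelyInseparable ↥L₀ l] (y : l)
    (hy : Submodule.span l {KaehlerDifferential.D ↥L₀ l y} = ⊤) :
    IntermediateField.adjoin ↥L₀ {y} = ⊤ := by
  obtain ⟨F', hF', hymem⟩ : ∃ F' : IntermediateField ↥L₀ l,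
      F' = IntermediateField.adjoin ↥L₀ {y} ∧ y ∈ F' :=
    ⟨_, rfl, IntermediateField.mem_adjoin_simple_self ↥L₀ y⟩
  rw [← hF']
  -- Ω[l⁄F'] is trivial
  have hsub : Subsingleton (Ω[l⁄↥F']) := by
    have hsurj2 : Function.Surjective (KaehlerDifferential.map ↥L₀ ↥F' l l) :=
      KaehlerDifferential.map_surjective ↥L₀ ↥F' l
    have hDy : KaehlerDifferential.map ↥L₀ ↥F' l l (KaehlerDifferential.D ↥L₀ l y) = 0 := by
      rw [KaehlerDifferential.map_D]
      have : (algebraMap l l) y = algebraMap ↥F' l ⟨y, hymem⟩ := rfl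
      rw [this, Derivation.map_algebraMap]
    refine subsingleton_of_forall_eq 0 fun w => ?_
    obtain ⟨ξ, rfl⟩ := hsurj2 w
    have hξ : ξ ∈ Submodule.span l {KaehlerDifferential.D ↥L₀ l y} := hy ▸ Submodule.mem_top
    obtain ⟨c, rfl⟩ := Submodule.mem_span_singleton.1 hξ
    rw [map_smul, hDy, smul_zero]
  -- l is separable and purely inseparable over F', hence F' = ⊤
  have hfd1 : FiniteDimensional ↥L₀ l := FiniteDimensional.right k ↥L₀ l
  have hfd2 : FiniteDimensional ↥F' l := FiniteDimensional.right ↥L₀ ↥F' l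
  have hft : Algebra.FiniteType ↥F' l := Module.Finite.finiteType l
  have heft : Algebra.EssFiniteType ↥F' l :=
    Algebra.EssFiniteType.of_finiteType ↥F' l
  have hfu : Algebra.FormallyUnramified ↥F' l := ⟨hsub⟩
  have hsep : Algebra.IsSeparable ↥F' l :=
    (Algebra.FormallyUnramified.iff_isSeparable ↥F' l).mp hfu
  refine eq_top_iff.2 fun z _ => ?_
  obtain ⟨w, hw⟩ := IsPurelyInseparable.surjective_algebraMap_of_isSeparable ↥F' l z
  rw [← hw]; exact w.2

theorem backward_dir (h : Module.rank l (Ω[l⁄k]) ≤ 1) :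
    ∃ x : l, IntermediateField.adjoin k {x} = ⊤ := by
  cases finite_or_infinite k with
  | inl hfin =>
    exact Field.exists_primitive_element_of_finite_bot k l
  | inr hinf =>
    -- rank of Ω[l⁄separableClosure k l] is at most 1
    have hsurj : Function.Surjective
        (KaehlerDifferential.map k ↥(separableClosure k l) l l) :=
      KaehlerDifferential.map_surjective k ↥(separableClosure k l) l
    have hrank : Module.rank l (Ω[l⁄↥(separableClosure k l)]) ≤ 1 :=
      le_trans (LinearMap.rank_le_of_surjective _ hsurj) h
    -- find y whose differential spans it
    obtain ⟨y, hy⟩ : ∃ y : l,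
        Submodule.span l {KaehlerDifferential.D ↥(separableClosure k l) l y} = ⊤ := by
      rcases subsingleton_or_nontrivial (Ω[l⁄↥(separableClosure k l)]) with hsub | hnt
      · exact ⟨0, Submodule.eq_top_iff'.2 fun w => by
          rw [Subsingleton.elim w 0]; exact Submodule.zero_mem _⟩
      · obtain ⟨v₀, hv₀⟩ := rank_le_one_iff.1 hrank
        have hex : ∃ y : l, KaehlerDifferential.D ↥(separableClosure k l) l y ≠ 0 := by
          by_contra hall
          push_neg at hall
          obtain ⟨w, hw⟩ := exists_ne (0 : Ω[l⁄↥(separableClosure k l)])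
          apply hw
          have hmem : w ∈ Submodule.span l
              (Set.range (KaehlerDifferential.D ↥(separableClosure k l) l)) := by
            rw [KaehlerDifferential.span_range_derivation]; trivial
          have : Submodule.span l
              (Set.range (KaehlerDifferential.D ↥(separableClosure k l) l)) ≤ ⊥ := by
            rw [Submodule.span_le]
            rintro _ ⟨a, rfl⟩
            simp [hall a]
          exact (Submodule.mem_bot _).1 (this hmem)
        obtain ⟨y, hy0⟩ := hex
        refine ⟨y, Submodule.eq_top_iff'.2 fun w => ?_⟩
        obtain ⟨c, hc⟩ := hv₀ (KaehlerDifferential.D ↥(separableClosure k l) l y)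
        obtain ⟨c', hc'⟩ := hv₀ w
        have hcne : c ≠ 0 := by
          rintro rfl; rw [zero_smul] at hc; exact hy0 hc.symm
        have : w = (c' * c⁻¹) • KaehlerDifferential.D ↥(separableClosure k l) l y := by
          rw [← hc', ← hc, smul_smul, mul_assoc, inv_mul_cancel₀ hcne, mul_one]
        rw [this]
        exact Submodule.smul_mem _ _ (Submodule.mem_span_singleton_self _)
    have hFtop' : IntermediateField.adjoin ↥(separableClosure k l) {y} = ⊤ :=
      adjoin_eq_top_of_span k l (separableClosure k l) y hy
    -- separableClosure is simple over k
    obtain ⟨x₀, hx₀⟩ := Field.exists_primitive_element k ↥(separableClosure k l)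
    have E1 : IntermediateField.adjoin k {(x₀ : l)} = separableClosure k l := by
      rw [← IntermediateField.lift_adjoin_simple, hx₀, IntermediateField.lift_top]
    have E2 : IntermediateField.adjoin k {(x₀ : l), y} = ⊤ := by
      have := IntermediateField.restrictScalars_adjoin_eq_sup (F := k) (E := l) (separableClosure k l) ({y} : Set l)
      rw [hFtop', IntermediateField.restrictScalars_top] at this
      rw [show ({(x₀ : l), y} : Set l) = {(x₀ : l)} ∪ {y} by rfl,
        IntermediateField.adjoin_union, E1, this]
    have hx₀sep : IsSeparable k ((x₀ : l)) := mem_separableClosure_iff.1 x₀.2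
    obtain ⟨γ, hγ⟩ := my_primitive_element_inf_aux k y (x₀ : l)
      (IsIntegral.of_finite k y) (IsIntegral.of_finite k (x₀ : l)) hx₀sep
    refine ⟨γ, ?_⟩
    rw [← hγ, show ({y, (x₀ : l)} : Set l) = {(x₀ : l), y} by rw [Set.pair_comm], E2]

end Backward

/-- A finite field extension `l/k` is simple if and only if the module of
Kähler differentials `Ω¹_{l/k}` has dimension at most `1` as an `l`-vector space. -/
theorem finite_extension_simple_iff_rank_kaehlerDifferential_le_one
    (k l : Type) [Field k] [Field l] [Algebra k l] [FiniteDimensional k l] :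
    (∃ x : l, IntermediateField.adjoin k {x} = ⊤) ↔
      Module.rank l (Ω[l⁄k]) ≤ 1 := by
  constructor
  · rintro ⟨x, hx⟩
    exact forward_dir k l x hx
  · exact backward_dir k l
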